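/- Let X be a nonempty finite type and let p, q : X → ℝ be probability mass functions on X (nonnegative, summing to 1) with q(x) > 0 for all x. Then the total variation distance is controlled by the Kullback–Leibler divergence: (Σ_{x∈X} |p(x) − q(x)|)² ≤ 2 · Σ_{x∈X} p(x) log(p(x)/q(x)), where terms with p(x) = 0 read as 0. -/

import Mathlib

noncomputable def pinskerG (t : ℝ) : ℝ := Real.log t - 3*(t-1)*(t+5)/(2*(t+2)^2)

noncomputable def pinskerF (t : ℝ) : ℝ := t * Real.log t - t + 1 - 3*(t-1)^2/(2*(t+2))

lemma pinskerG_hasDeriv {t : ℝ} (ht : 0 < t) :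
    HasDerivAt pinskerG (1/t - 27/(t+2)^3) t := by
  have h2 : (0:ℝ) < t + 2 := by linarith
  have hu : HasDerivAt (fun s : ℝ => 3*(s-1)*(s+5)) (6*t+12) t := by
    have := (((hasDerivAt_id t).sub_const 1).const_mul 3).mul ((hasDerivAt_id t).add_const 5)
    refine this.congr_deriv ?_; (try simp only [id_eq]); ring
  have hv : HasDerivAt (fun s : ℝ => 2*(s+2)^2) (4*(t+2)) t := by
    have := (((hasDerivAt_id t).add_const 2).pow 2).const_mul 2
    refine this.congr_deriv ?_; (try simp only [id_eq]); ring
  have hvne : (2*(t+2)^2 : ℝ) ≠ 0 := by positivity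
  have hd := hu.div hv hvne
  have hl := Real.hasDerivAt_log ht.ne'
  have := hl.sub hd
  refine this.congr_deriv ?_
  field_simp
  ring

lemma pinskerF_hasDeriv {t : ℝ} (ht : 0 < t) :
    HasDerivAt pinskerF (pinskerG t) t := by
  have h2 : (0:ℝ) < t + 2 := by linarith
  have h1 : HasDerivAt (fun s : ℝ => s * Real.log s) (Real.log t + 1) t := by
    have := (hasDerivAt_id t).mul (Real.hasDerivAt_log ht.ne')
    refine this.congr_deriv ?_
    field_simp
    simp only [id_eq]; ring
  have hu : HasDerivAt (fun s : ℝ => 3*(s-1)^2) (6*(t-1)) t := by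
    have := (((hasDerivAt_id t).sub_const 1).pow 2).const_mul 3
    refine this.congr_deriv ?_; (try simp only [id_eq]); ring
  have hv : HasDerivAt (fun s : ℝ => 2*(s+2)) (2:ℝ) t := by
    have := ((hasDerivAt_id t).add_const 2).const_mul 2
    refine this.congr_deriv ?_; (try simp only [id_eq]); ring
  have hvne : (2*(t+2) : ℝ) ≠ 0 := by positivity
  have hd := hu.div hv hvne
  have := ((h1.sub (hasDerivAt_id t)).add_const 1).sub hd
  refine this.congr_deriv ?_
  unfold pinskerG
  field_simp
  ring

lemma pinskerG_mono : MonotoneOn pinskerG (Set.Ioi (0:ℝ)) := by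
  apply monotoneOn_of_deriv_nonneg (convex_Ioi 0)
  · exact fun t ht => (pinskerG_hasDeriv ht).differentiableAt.continuousAt.continuousWithinAt
  · rw [interior_Ioi]
    exact fun t ht => (pinskerG_hasDeriv ht).differentiableAt.differentiableWithinAt
  · rw [interior_Ioi]
    intro t ht
    rw [(pinskerG_hasDeriv ht).deriv]
    have ht' : (0:ℝ) < t := ht
    have h2 : (0:ℝ) < t + 2 := by linarith
    rw [sub_nonneg, div_le_div_iff₀ (by positivity) ht']
    nlinarith [sq_nonneg (t-1), mul_nonneg (sq_nonneg (t-1)) (by linarith : (0:ℝ) ≤ t + 8)]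

lemma pinskerG_one : pinskerG 1 = 0 := by simp [pinskerG]

lemma pinskerF_one : pinskerF 1 = 0 := by norm_num [pinskerF]

lemma pinskerF_nonneg {t : ℝ} (ht : 0 < t) : 0 ≤ pinskerF t := by
  rcases le_total 1 t with h | h
  · have hmono : MonotoneOn pinskerF (Set.Ici (1:ℝ)) := by
      apply monotoneOn_of_deriv_nonneg (convex_Ici 1)
      · exact fun s hs => (pinskerF_hasDeriv (lt_of_lt_of_le one_pos hs)).differentiableAt.continuousAt.continuousWithinAt
      · rw [interior_Ici]
        exact fun s hs => (pinskerF_hasDeriv (lt_trans one_pos hs)).differentiableAt.differentiableWithinAt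
      · rw [interior_Ici]
        intro s hs
        rw [(pinskerF_hasDeriv (lt_trans one_pos hs)).deriv, ← pinskerG_one]
        exact pinskerG_mono (Set.mem_Ioi.2 one_pos) (Set.mem_Ioi.2 (lt_trans one_pos hs)) hs.le
    calc (0:ℝ) = pinskerF 1 := pinskerF_one.symm
      _ ≤ pinskerF t := hmono (by norm_num) h h
  · have hanti : AntitoneOn pinskerF (Set.Ioc (0:ℝ) 1) := by
      apply antitoneOn_of_deriv_nonpos (convex_Ioc 0 1)
      · exact fun s hs => (pinskerF_hasDeriv hs.1).differentiableAt.continuousAt.continuousWithinAt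
      · rw [interior_Ioc]
        exact fun s hs => (pinskerF_hasDeriv hs.1).differentiableAt.differentiableWithinAt
      · rw [interior_Ioc]
        intro s hs
        rw [(pinskerF_hasDeriv hs.1).deriv, ← pinskerG_one]
        exact pinskerG_mono (Set.mem_Ioi.2 hs.1) (Set.mem_Ioi.2 one_pos) hs.2.le
    calc (0:ℝ) = pinskerF 1 := pinskerF_one.symm
      _ ≤ pinskerF t := hanti ⟨ht, h⟩ (by norm_num) h

lemma pinsker_pointwise {p q : ℝ} (hp : 0 ≤ p) (hq : 0 < q) :
    3*(p-q)^2/(2*(p+2*q)) ≤ p * Real.log (p/q) - p + q := by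
  rcases eq_or_lt_of_le hp with h | h
  · rw [← h]
    simp only [zero_mul, zero_div, Real.log_zero, mul_zero, zero_sub, neg_add_eq_sub]
    rw [div_le_iff₀ (by linarith)]
    nlinarith
  · have key := pinskerF_nonneg (div_pos h hq)
    unfold pinskerF at key
    have h2 : 3*(p-q)^2/(2*(p+2*q)) = q * (3*((p/q)-1)^2/(2*((p/q)+2))) := by
      field_simp
    have h3 : p * Real.log (p/q) - p + q = q * ((p/q) * Real.log (p/q) - (p/q) + 1) := by
      field_simp
    rw [h2, h3]
    have := mul_le_mul_of_nonneg_left key hq.le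
    linarith

/-- Pinsker's inequality for probability mass functions on a nonempty finite type:
the squared total variation (as the full ℓ¹ distance) is bounded by twice the
Kullback–Leibler divergence. -/
theorem pinsker_pmf {X : Type*} [Fintype X] [Nonempty X]
    (p q : X → ℝ)
    (hp0 : ∀ x, 0 ≤ p x) (hp1 : ∑ x, p x = 1)
    (hq0 : ∀ x, 0 < q x) (hq1 : ∑ x, q x = 1) :
    (∑ x, |p x - q x|) ^ 2 ≤ 2 * ∑ x, p x * Real.log (p x / q x) := by
  have hpq : ∀ x, (0:ℝ) < p x + 2 * q x := fun x => by
    have := hp0 x; have := hq0 x; linarith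
  have hCS := Finset.sq_sum_div_le_sum_sq_div Finset.univ (fun x => |p x - q x|)
    (g := fun x => p x + 2 * q x) (fun x _ => hpq x)
  have hsum3 : ∑ x, (p x + 2 * q x) = 3 := by
    rw [Finset.sum_add_distrib, hp1, ← Finset.mul_sum, hq1]; norm_num
  simp only [hsum3] at hCS
  have hsum : ∑ x, 3*(p x - q x)^2/(2*(p x + 2*q x))
      ≤ ∑ x, (p x * Real.log (p x / q x) - p x + q x) :=
    Finset.sum_le_sum fun x _ => pinsker_pointwise (hp0 x) (hq0 x)
  have hR : ∑ x, (p x * Real.log (p x / q x) - p x + q x)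
      = ∑ x, p x * Real.log (p x / q x) := by
    simp [Finset.sum_add_distrib, Finset.sum_sub_distrib, hp1, hq1]
  have hL : ∑ x, 3*(p x - q x)^2/(2*(p x + 2*q x))
      = (3/2) * ∑ x, |p x - q x|^2/(p x + 2 * q x) := by
    rw [Finset.mul_sum]
    refine Finset.sum_congr rfl fun x _ => ?_
    rw [sq_abs]
    field_simp
  rw [hL, hR] at hsum
  rw [div_le_iff₀ (by norm_num : (0:ℝ) < 3)] at hCS
  calc (∑ x, |p x - q x|) ^ 2 ≤ (∑ x, |p x - q x|^2/(p x + 2 * q x)) * 3 := hCS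
    _ = 2 * ((3/2) * ∑ x, |p x - q x|^2/(p x + 2 * q x)) := by ring
    _ ≤ 2 * ∑ x, p x * Real.log (p x / q x) := by linarith
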